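/- arXiv:1310.7716 — 2 statements merged into one kernel-verified Lean document; each statement's English description precedes it below -/
import Mathlib

section
/- Let r ≥ 1, let A = (a_{νμ}) ∈ M_r(ℝ) have all entries strictly positive, let x = (x_ν), y = (y_ν) ∈ (0,1)^r, and let s = (s_ν) ∈ ℂ^r satisfy Re(s_1 + ⋯ + s_r) > r. Then the multiple series Σ_{m ∈ ℤ_{≥0}^r} e(m·y) / ∏_{ν=1}^r (Σ_{μ=1}^r a_{νμ}(x_μ + m_μ))^{s_ν} converges absolutely. -/
open MeasureTheory

noncomputable section

/-- `e z = exp (2 π i z)` -/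
def eC (z : ℂ) : ℂ := Complex.exp (2 * Real.pi * Complex.I * z)

/-- `φ(t,x,y) = e(itx)/(1 - e(y + it))` -/
def phiF (t x y : ℝ) : ℂ := eC (Complex.I * t * x) / (1 - eC (y + Complex.I * t))

/-- `F(t,x,y) = ∏_ν φ(t_ν, x_ν, y_ν)` -/
def FF {r : ℕ} (t x y : Fin r → ℝ) : ℂ := ∏ ν, phiF (t ν) (x ν) (y ν)

/-- `Γ_ℝ(s) = π^(-s/2) Γ(s/2)` -/
def GammaR (s : ℂ) : ℂ := (Real.pi : ℂ) ^ (-s / 2) * Complex.Gamma (s / 2)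

/-- `Γ_ℂ(s) = 2 (2π)^(-s) Γ(s)` -/
def GammaC (s : ℂ) : ℂ := 2 * (2 * (Real.pi : ℂ)) ^ (-s) * Complex.Gamma s

/-- the quasi-character `|t|_χ^s = ∏_ν sgn(t_ν)^{χ(ν)} |t_ν|^{s_ν}` -/
def qchar {r : ℕ} (χ : Fin r → ℕ) (s : Fin r → ℂ) (t : Fin r → ℝ) : ℂ :=
  ∏ ν, ((Real.sign (t ν) : ℂ)) ^ (χ ν) * ((|t ν| : ℝ) : ℂ) ^ (s ν)

/-- the Shintani L-function, defined by the integral representation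
`L(s,A,x,y) = 2^r (∏ Γ_ℂ(s_ν))⁻¹ ∫_{(0,∞)^r} F(tA,x,y) t^s ∏ dt_ν/t_ν` -/
def ShintaniL {r : ℕ} (s : Fin r → ℂ) (A : Matrix (Fin r) (Fin r) ℝ)
    (x y : Fin r → ℝ) : ℂ :=
  2 ^ r * (∏ ν, GammaC (s ν))⁻¹ *
    ∫ t in Set.univ.pi fun _ : Fin r => Set.Ioi (0 : ℝ),
      FF (Matrix.vecMul t A) x y * ∏ ν, (((t ν : ℝ) : ℂ) ^ (s ν) * ((t ν : ℝ) : ℂ)⁻¹)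

/-- the normalized Shintani L-function of parity type χ,
`L_χ(s,A,x,y) = (∏ Γ_ℂ(s_ν))⁻¹ ∫_{(ℝ^×)^r} F(tA,x,y) |t|_χ^s ∏ dt_ν/t_ν` -/
def ShintaniLchi {r : ℕ} (χ : Fin r → ℕ) (s : Fin r → ℂ)
    (A : Matrix (Fin r) (Fin r) ℝ) (x y : Fin r → ℝ) : ℂ :=
  (∏ ν, GammaC (s ν))⁻¹ *
    ∫ t : Fin r → ℝ,
      FF (Matrix.vecMul t A) x y * qchar χ s t * ∏ ν, ((t ν : ℝ) : ℂ)⁻¹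

/-- `Γ_χ(s) = ∏_ν Γ_ℝ(s_ν + χ(ν))` -/
def GammaChi {r : ℕ} (χ : Fin r → ℕ) (s : Fin r → ℂ) : ℂ :=
  ∏ ν, GammaR (s ν + (χ ν : ℂ))

/-- the completed normalized Shintani L-function
`L̂_χ(s,A,x,y) = |det A|^{1/2} Γ_χ(s) L_χ(s,A,x,y)` -/
def ShintaniLhat {r : ℕ} (χ : Fin r → ℕ) (s : Fin r → ℂ)
    (A : Matrix (Fin r) (Fin r) ℝ) (x y : Fin r → ℝ) : ℂ :=
  ((Real.sqrt |A.det| : ℝ) : ℂ) * GammaChi χ s * ShintaniLchi χ s A x y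



private lemma aux_summable_pi : ∀ (r : ℕ) (g : Fin r → ℕ → ℝ), (∀ i n, 0 ≤ g i n) →
    (∀ i, Summable (g i)) → Summable (fun m : Fin r → ℕ => ∏ i, g i (m i)) := by
  intro r
  induction r with
  | zero => intro g _ _; exact Summable.of_finite
  | succ n ih =>
    intro g h0 hg
    have key : Summable (fun p : ℕ × (Fin n → ℕ) =>
        g 0 p.1 * ∏ i : Fin n, g i.succ (p.2 i)) := by
      have hP : Summable (fun b : Fin n → ℕ => ∏ i : Fin n, g i.succ (b i)) :=
        ih (fun i => g i.succ) (fun i k => h0 i.succ k) (fun i => hg i.succ)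
      have h1 : Summable (fun b : Fin n → ℕ => ‖∏ i : Fin n, g i.succ (b i)‖) :=
        hP.abs.congr fun b => (Real.norm_eq_abs _).symm
      have h2 : Summable (fun k : ℕ => ‖g 0 k‖) :=
        (hg 0).abs.congr fun k => (Real.norm_eq_abs _).symm
      have h3 := h2.mul_norm h1
      refine h3.congr fun p => ?_
      rw [Real.norm_eq_abs, abs_of_nonneg (mul_nonneg (h0 0 p.1)
        (Finset.prod_nonneg fun i _ => h0 i.succ (p.2 i)))]
    rw [← (Fin.consEquiv fun _ : Fin (n + 1) => ℕ).summable_iff]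
    refine key.congr fun p => ?_
    simp [Fin.consEquiv, Fin.prod_univ_succ]

theorem stmt_0 (r : ℕ) (hr : 1 ≤ r) (A : Matrix (Fin r) (Fin r) ℝ)
    (hA : ∀ ν μ, 0 < A ν μ) (x y : Fin r → ℝ)
    (hx : ∀ ν, x ν ∈ Set.Ioo (0 : ℝ) 1) (hy : ∀ ν, y ν ∈ Set.Ioo (0 : ℝ) 1)
    (s : Fin r → ℂ) (hs : (r : ℝ) < (∑ ν, s ν).re) :
    Summable (fun m : Fin r → ℕ =>
      ‖eC ((∑ ν, (m ν : ℝ) * y ν : ℝ) : ℂ) /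
        ∏ ν, (((∑ μ, A ν μ * (x μ + (m μ : ℝ)) : ℝ) : ℂ)) ^ (s ν)‖) := by
  haveI : Nonempty (Fin r) := Fin.pos_iff_nonempty.mp hr
  have hune : (Finset.univ : Finset (Fin r)).Nonempty := Finset.univ_nonempty
  set σ : Fin r → ℝ := fun ν => (s ν).re with hσdef
  have hσsum : (r : ℝ) < ∑ ν, σ ν := by
    simpa [Complex.re_sum] using hs
  set c : (Fin r → ℕ) → Fin r → ℝ :=
    fun m ν => ∑ μ, A ν μ * (x μ + (m μ : ℝ)) with hcdef
  have hc_pos : ∀ m ν, 0 < c m ν := by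
    intro m ν
    refine Finset.sum_pos (fun μ _ => ?_) hune
    have := (hx μ).1
    have := (m μ).cast_nonneg (α := ℝ)
    have := hA ν μ
    positivity
  set S : (Fin r → ℕ) → ℝ := fun m => ∑ μ, ((m μ : ℝ)) with hSdef
  have hS0 : ∀ m, 0 ≤ S m := fun m => Finset.sum_nonneg fun μ _ => (m μ).cast_nonneg
  have hT0 : ∀ m, (0 : ℝ) < 1 + S m := fun m => by have := hS0 m; linarith
  set α : Fin r → ℝ := fun ν => min (∑ μ, A ν μ * x μ) (Finset.univ.inf' hune (A ν)) with hαdef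
  set M : Fin r → ℝ := fun ν => max (∑ μ, A ν μ * x μ) (Finset.univ.sup' hune (A ν)) with hMdef
  have hα_pos : ∀ ν, 0 < α ν := by
    intro ν
    refine lt_min ?_ ?_
    · exact Finset.sum_pos (fun μ _ => mul_pos (hA ν μ) (hx μ).1) hune
    · exact (Finset.lt_inf'_iff _).2 fun μ _ => hA ν μ
  have hM_pos : ∀ ν, 0 < M ν := fun ν => lt_of_lt_of_le (hα_pos ν) ((min_le_left _ _).trans (le_max_left _ _))
  have hlow : ∀ m ν, α ν * (1 + S m) ≤ c m ν := by
    intro m ν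
    have h1 : α ν ≤ ∑ μ, A ν μ * x μ := min_le_left _ _
    have h2 : α ν * S m ≤ ∑ μ, A ν μ * (m μ : ℝ) := by
      rw [hSdef, Finset.mul_sum]
      refine Finset.sum_le_sum fun μ _ => ?_
      exact mul_le_mul_of_nonneg_right
        ((min_le_right _ _).trans (Finset.inf'_le _ (Finset.mem_univ μ))) (m μ).cast_nonneg
    have h3 : c m ν = (∑ μ, A ν μ * x μ) + ∑ μ, A ν μ * (m μ : ℝ) := by
      rw [hcdef, ← Finset.sum_add_distrib]
      exact Finset.sum_congr rfl fun μ _ => by ring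
    rw [h3]; nlinarith [hα_pos ν, hS0 m]
  have hhigh : ∀ m ν, c m ν ≤ M ν * (1 + S m) := by
    intro m ν
    have h1 : (∑ μ, A ν μ * x μ) ≤ M ν := le_max_left _ _
    have h2 : (∑ μ, A ν μ * (m μ : ℝ)) ≤ M ν * S m := by
      rw [hSdef, Finset.mul_sum]
      refine Finset.sum_le_sum fun μ _ => ?_
      exact mul_le_mul_of_nonneg_right
        ((Finset.le_sup' _ (Finset.mem_univ μ)).trans (le_max_right _ _)) (m μ).cast_nonneg
    have h3 : c m ν = (∑ μ, A ν μ * x μ) + ∑ μ, A ν μ * (m μ : ℝ) := by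
      rw [hcdef, ← Finset.sum_add_distrib]
      exact Finset.sum_congr rfl fun μ _ => by ring
    rw [h3]; linarith
  set K : Fin r → ℝ := fun ν => max ((α ν) ^ (-σ ν)) ((M ν) ^ (-σ ν)) with hKdef
  have hK_nonneg : ∀ ν, 0 ≤ K ν :=
    fun ν => le_trans (Real.rpow_nonneg (hα_pos ν).le _) (le_max_left _ _)
  have hKν : ∀ m ν, (c m ν) ^ (-σ ν) ≤ K ν * (1 + S m) ^ (-σ ν) := by
    intro m ν
    set T := 1 + S m
    have hT : (0 : ℝ) < T := hT0 m
    set u := c m ν / T with hudef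
    have hu_pos : 0 < u := div_pos (hc_pos m ν) hT
    have hu1 : α ν ≤ u := (le_div_iff₀ hT).2 (hlow m ν)
    have hu2 : u ≤ M ν := (div_le_iff₀ hT).2 (hhigh m ν)
    have hcu : c m ν = u * T := by rw [hudef, div_mul_cancel₀ _ hT.ne']
    rw [hcu, Real.mul_rpow hu_pos.le hT.le]
    refine mul_le_mul_of_nonneg_right ?_ (Real.rpow_nonneg hT.le _)
    rcases le_or_gt 0 (-σ ν) with h | h
    · exact le_trans (Real.rpow_le_rpow hu_pos.le hu2 h) (le_max_right _ _)
    · exact le_trans (Real.rpow_le_rpow_of_nonpos (hα_pos ν) hu1 h.le) (le_max_left _ _)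
  set p : ℝ := (∑ ν, σ ν) / r with hpdef
  have hr0 : (0 : ℝ) < r := by exact_mod_cast hr
  have hp : 1 < p := (one_lt_div hr0).2 hσsum
  have hbound : ∀ m, ∏ ν, (c m ν) ^ (-σ ν) ≤
      (∏ ν, K ν) * ∏ ν, (1 + (m ν : ℝ)) ^ (-p) := by
    intro m
    set T := 1 + S m with hTdef
    have hT : (0 : ℝ) < T := hT0 m
    have step1 : ∏ ν, (c m ν) ^ (-σ ν) ≤ (∏ ν, K ν) * T ^ (-(∑ ν, σ ν)) := by
      have : ∏ ν, (c m ν) ^ (-σ ν) ≤ ∏ ν, (K ν * T ^ (-σ ν)) :=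
        Finset.prod_le_prod (fun ν _ => Real.rpow_nonneg (hc_pos m ν).le _)
          (fun ν _ => hKν m ν)
      refine this.trans (le_of_eq ?_)
      rw [Finset.prod_mul_distrib]
      congr 1
      rw [← Real.rpow_sum_of_pos hT, ← Finset.sum_neg_distrib]
    have step2 : T ^ (-(∑ ν, σ ν)) ≤ ∏ ν, (1 + (m ν : ℝ)) ^ (-p) := by
      have hps : (-p) * r = -(∑ ν, σ ν) := by
        rw [hpdef, neg_mul, div_mul_cancel₀ _ hr0.ne']
      have hrw : T ^ (-(∑ ν, σ ν)) = ∏ _ν : Fin r, T ^ (-p) := by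
        rw [Finset.prod_const, Finset.card_univ, Fintype.card_fin,
          ← Real.rpow_natCast (T ^ (-p)) r, ← Real.rpow_mul hT.le, hps]
      rw [hrw]
      refine Finset.prod_le_prod (fun ν _ => Real.rpow_nonneg hT.le _) (fun ν _ => ?_)
      have h1 : (0 : ℝ) < 1 + (m ν : ℝ) := by positivity
      have h2 : 1 + (m ν : ℝ) ≤ T := by
        rw [hTdef, hSdef]
        have : (m ν : ℝ) ≤ ∑ μ, ((m μ : ℝ)) :=
          Finset.single_le_sum (f := fun μ => ((m μ : ℝ)))
            (fun μ _ => (m μ).cast_nonneg) (Finset.mem_univ ν)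
        linarith
      exact Real.rpow_le_rpow_of_nonpos h1 h2 (by linarith)
    calc ∏ ν, (c m ν) ^ (-σ ν) ≤ (∏ ν, K ν) * T ^ (-(∑ ν, σ ν)) := step1
      _ ≤ (∏ ν, K ν) * ∏ ν, (1 + (m ν : ℝ)) ^ (-p) :=
        mul_le_mul_of_nonneg_left step2 (Finset.prod_nonneg fun ν _ => hK_nonneg ν)
  have hnorm : ∀ m : Fin r → ℕ,
      ‖eC ((∑ ν, (m ν : ℝ) * y ν : ℝ) : ℂ) /
        ∏ ν, (((∑ μ, A ν μ * (x μ + (m μ : ℝ)) : ℝ) : ℂ)) ^ (s ν)‖ =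
      ∏ ν, (c m ν) ^ (-σ ν) := by
    intro m
    rw [norm_div]
    have hnum : ‖eC ((∑ ν, (m ν : ℝ) * y ν : ℝ) : ℂ)‖ = 1 := by
      rw [eC, Complex.norm_exp]
      have : (2 * (Real.pi : ℂ) * Complex.I * ((∑ ν, (m ν : ℝ) * y ν : ℝ) : ℂ)).re = 0 := by
        simp [Complex.mul_re, Complex.mul_im]
      rw [this, Real.exp_zero]
    rw [hnum, norm_prod]
    have hden : ∀ ν : Fin r,
        ‖(((∑ μ, A ν μ * (x μ + (m μ : ℝ)) : ℝ) : ℂ)) ^ (s ν)‖ = (c m ν) ^ (σ ν) := by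
      intro ν
      rw [Complex.norm_cpow_eq_rpow_re_of_pos (hc_pos m ν)]
    rw [Finset.prod_congr rfl fun ν _ => hden ν, one_div, ← Finset.prod_inv_distrib]
    exact Finset.prod_congr rfl fun ν _ => (Real.rpow_neg (hc_pos m ν).le _).symm
  have hg1 : Summable (fun n : ℕ => (1 + (n : ℝ)) ^ (-p)) := by
    have h := Real.summable_nat_rpow (p := -p).2 (by linarith)
    have h2 := h.comp_injective (add_left_injective 1)
    refine h2.congr fun n => ?_
    simp only [Function.comp]
    push_cast
    ring_nf
  have hgsum : Summable (fun m : Fin r → ℕ =>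
      (∏ ν, K ν) * ∏ ν, (1 + (m ν : ℝ)) ^ (-p)) := by
    refine Summable.mul_left _ ?_
    exact aux_summable_pi r (fun _ n => (1 + (n : ℝ)) ^ (-p))
      (fun _ n => Real.rpow_nonneg (by positivity) _) (fun _ => hg1)
  refine Summable.of_nonneg_of_le (fun m => norm_nonneg _) (fun m => ?_) hgsum
  rw [hnorm m]
  exact hbound m


end
end

section
/- Let r ≥ 1, A ∈ GL_r(ℝ), x, y ∈ (0,1)^r, and k ∈ ℝ^r. Then ∫_{ℝ^r} F(tA, x, y) e(t·k) dt = (i^r / |det A|) · e(−y·x) · F(kA*, y, 1−x), where A* = (Aᵀ)^{−1} and 1−x = (1−x_1,…,1−x_r). -/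
open MeasureTheory

noncomputable section

namespace ShintaniAux
open Set Filter

def gI (s : ℂ) (θ : ℝ) (u : ℝ) : ℂ :=
  (u:ℂ) ^ (s - 1) / (1 + Complex.exp (θ * Complex.I) * u)

def g2I (s : ℂ) (θ : ℝ) (u : ℝ) : ℂ :=
  (u:ℂ) ^ s / (1 + Complex.exp (θ * Complex.I) * u) ^ 2

def HI (s : ℂ) (θ : ℝ) : ℂ := ∫ u in Ioi (0:ℝ), gI s θ u

lemma cos_half_pos {θ : ℝ} (hθ : |θ| < Real.pi) : 0 < Real.cos (θ / 2) := by
  have := abs_lt.1 hθ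
  exact Real.cos_pos_of_mem_Ioo ⟨by linarith [this.1], by linarith [this.2]⟩

lemma abs_one_add_exp_mul {θ : ℝ} (u : ℝ) (hu : 0 ≤ u) (hθ : |θ| < Real.pi) :
    Real.cos (θ / 2) * (1 + u) ≤ ‖1 + Complex.exp (θ * Complex.I) * u‖ := by
  have hc : 0 < Real.cos (θ / 2) := cos_half_pos hθ
  have hc1 : Real.cos (θ / 2) ≤ 1 := Real.cos_le_one _
  have hsq : Real.cos θ = 2 * Real.cos (θ / 2) ^ 2 - 1 := by
    have := Real.cos_two_mul (θ / 2)
    rwa [show 2 * (θ / 2) = θ by ring] at this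
  have h2 : (‖1 + Complex.exp (θ * Complex.I) * u‖) ^ 2
      = 1 + 2 * u * Real.cos θ + u ^ 2 := by
    rw [Complex.sq_norm, Complex.normSq_apply]
    simp [Complex.exp_ofReal_mul_I_re, Complex.exp_ofReal_mul_I_im]
    nlinarith [Real.sin_sq_add_cos_sq θ]
  have habs : 0 ≤ ‖1 + Complex.exp (θ * Complex.I) * u‖ := norm_nonneg _
  have hB : 0 < Real.cos (θ / 2) * (1 + u) := mul_pos hc (by linarith)
  have key : (Real.cos (θ / 2) * (1 + u)) ^ 2
      ≤ (‖1 + Complex.exp (θ * Complex.I) * u‖) ^ 2 := by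
    rw [h2]
    nlinarith [mul_nonneg (by nlinarith : (0:ℝ) ≤ 1 - Real.cos (θ/2) ^ 2) (sq_nonneg (1 - u))]
  exact (pow_le_pow_iff_left₀ hB.le habs two_ne_zero).mp key

lemma one_add_exp_mul_ne {θ : ℝ} (u : ℝ) (hu : 0 ≤ u) (hθ : |θ| < Real.pi) :
    (1 + Complex.exp (θ * Complex.I) * u) ≠ 0 := by
  have h := abs_one_add_exp_mul u hu hθ
  have hc : 0 < Real.cos (θ / 2) := cos_half_pos hθ
  intro h0
  rw [h0] at h
  simp only [norm_zero] at h
  nlinarith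

lemma integrableOn_B1 {x : ℝ} (hx0 : 0 < x) (hx1 : x < 1) :
    IntegrableOn (fun u : ℝ => u ^ (x - 1) / (1 + u)) (Ioi 0) := by
  have h : Ioc (0:ℝ) 1 ∪ Ioi 1 = Ioi 0 := Ioc_union_Ioi_eq_Ioi zero_le_one
  rw [← h]
  apply IntegrableOn.union
  · have hint : IntegrableOn (fun u : ℝ => u ^ (x - 1)) (Ioc (0:ℝ) 1) := by
      have := intervalIntegral.intervalIntegrable_rpow' (a := 0) (b := 1) (r := x - 1) (by linarith)
      rwa [intervalIntegrable_iff_integrableOn_Ioc_of_le zero_le_one] at this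
    refine Integrable.mono' hint ?_ ?_
    · apply ContinuousOn.aestronglyMeasurable ?_ measurableSet_Ioc
      intro u hu
      exact ContinuousWithinAt.div
        ((Real.continuousAt_rpow_const u (x-1) (Or.inl (ne_of_gt hu.1)))).continuousWithinAt
        ((continuous_const.add continuous_id).continuousWithinAt)
        (by intro h; linarith [hu.1, h])
    · filter_upwards [ae_restrict_mem measurableSet_Ioc] with u hu
      have h1 : (0:ℝ) < 1 + u := by linarith [hu.1]
      rw [Real.norm_eq_abs,
        abs_of_nonneg (div_nonneg (Real.rpow_nonneg hu.1.le _) h1.le), div_le_iff₀ h1]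
      nlinarith [mul_nonneg (Real.rpow_nonneg hu.1.le (x-1)) hu.1.le]
  · have hint : IntegrableOn (fun u : ℝ => u ^ (x - 2)) (Ioi (1:ℝ)) :=
      integrableOn_Ioi_rpow_of_lt (by linarith) one_pos
    refine Integrable.mono' hint ?_ ?_
    · apply ContinuousOn.aestronglyMeasurable ?_ measurableSet_Ioi
      intro u hu
      have h0 : (0:ℝ) < u := lt_trans one_pos hu
      exact ContinuousWithinAt.div
        ((Real.continuousAt_rpow_const u (x-1) (Or.inl (ne_of_gt h0)))).continuousWithinAt
        ((continuous_const.add continuous_id).continuousWithinAt)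
        (by intro h; linarith)
    · filter_upwards [ae_restrict_mem measurableSet_Ioi] with u hu
      have h0 : (0:ℝ) < u := lt_trans one_pos hu
      rw [Real.norm_eq_abs,
        abs_of_nonneg (div_nonneg (Real.rpow_nonneg h0.le _) (by linarith))]
      calc u ^ (x - 1) / (1 + u) ≤ u ^ (x - 1) / u :=
            div_le_div_of_nonneg_left (Real.rpow_nonneg h0.le _) h0 (by linarith)
        _ = u ^ (x - 2) := by
          rw [show x - 2 = (x - 1) - 1 by ring, Real.rpow_sub h0 (x-1) 1, Real.rpow_one]

lemma integrableOn_B2 {x : ℝ} (hx0 : 0 < x) (hx1 : x < 1) :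
    IntegrableOn (fun u : ℝ => u ^ x / (1 + u) ^ 2) (Ioi 0) := by
  have h : Ioc (0:ℝ) 1 ∪ Ioi 1 = Ioi 0 := Ioc_union_Ioi_eq_Ioi zero_le_one
  rw [← h]
  apply IntegrableOn.union
  · have hint : IntegrableOn (fun u : ℝ => u ^ x) (Ioc (0:ℝ) 1) := by
      have := intervalIntegral.intervalIntegrable_rpow' (a := 0) (b := 1) (r := x) (by linarith)
      rwa [intervalIntegrable_iff_integrableOn_Ioc_of_le zero_le_one] at this
    refine Integrable.mono' hint ?_ ?_
    · apply ContinuousOn.aestronglyMeasurable ?_ measurableSet_Ioc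
      intro u hu
      exact ContinuousWithinAt.div
        ((Real.continuousAt_rpow_const u x (Or.inl (ne_of_gt hu.1)))).continuousWithinAt
        (((continuous_const.add continuous_id).pow 2)).continuousWithinAt
        (by intro h; nlinarith [hu.1, sq_nonneg (1+u)])
    · filter_upwards [ae_restrict_mem measurableSet_Ioc] with u hu
      have h1 : (0:ℝ) < (1 + u) ^ 2 := by nlinarith [hu.1]
      rw [Real.norm_eq_abs,
        abs_of_nonneg (div_nonneg (Real.rpow_nonneg hu.1.le _) h1.le), div_le_iff₀ h1]
      nlinarith [mul_nonneg (Real.rpow_nonneg hu.1.le x)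
        (by nlinarith [hu.1] : (0:ℝ) ≤ (1 + u) ^ 2 - 1)]
  · have hint : IntegrableOn (fun u : ℝ => u ^ (x - 2)) (Ioi (1:ℝ)) :=
      integrableOn_Ioi_rpow_of_lt (by linarith) one_pos
    refine Integrable.mono' hint ?_ ?_
    · apply ContinuousOn.aestronglyMeasurable ?_ measurableSet_Ioi
      intro u hu
      have h0 : (0:ℝ) < u := lt_trans one_pos hu
      exact ContinuousWithinAt.div
        ((Real.continuousAt_rpow_const u x (Or.inl (ne_of_gt h0)))).continuousWithinAt
        (((continuous_const.add continuous_id).pow 2)).continuousWithinAt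
        (by intro h; nlinarith)
    · filter_upwards [ae_restrict_mem measurableSet_Ioi] with u hu
      have h0 : (0:ℝ) < u := lt_trans one_pos hu
      rw [Real.norm_eq_abs,
        abs_of_nonneg (div_nonneg (Real.rpow_nonneg h0.le _) (by positivity))]
      have h2 : u ^ 2 ≤ (1 + u) ^ 2 := by nlinarith
      calc u ^ x / (1 + u) ^ 2 ≤ u ^ x / u ^ 2 :=
            div_le_div_of_nonneg_left (Real.rpow_nonneg h0.le _) (by positivity) h2
        _ = u ^ (x - 2) := by
          rw [show x - 2 = x - ((2:ℕ):ℝ) by norm_num, Real.rpow_sub h0 x ((2:ℕ):ℝ), Real.rpow_natCast]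


/-- the θ-derivative of `gI` -/
def DG (s : ℂ) (θ : ℝ) (u : ℝ) : ℂ :=
  -((u:ℂ) ^ (s - 1) * (Complex.exp (θ * Complex.I) * Complex.I * u)) /
    (1 + Complex.exp (θ * Complex.I) * u) ^ 2

lemma cos_half_ge {θ b : ℝ} (hb : b < Real.pi) (hb0 : 0 ≤ b) (h : |θ| ≤ b) :
    Real.cos (b / 2) ≤ Real.cos (θ / 2) := by
  rw [← Real.cos_abs (θ / 2), abs_div, abs_of_nonneg (by norm_num : (0:ℝ) ≤ (2:ℝ))]
  apply Real.cos_le_cos_of_nonneg_of_le_pi (by positivity) (by linarith [Real.pi_pos])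
  linarith

lemma norm_gI {s : ℂ} {θ : ℝ} {u : ℝ} (hu : 0 < u) (hθ : |θ| < Real.pi) :
    ‖gI s θ u‖ ≤ (Real.cos (θ / 2))⁻¹ * (u ^ (s.re - 1) / (1 + u)) := by
  have hc : 0 < Real.cos (θ / 2) := cos_half_pos hθ
  have hA := abs_one_add_exp_mul u hu.le hθ
  have hApos : 0 < ‖1 + Complex.exp (θ * Complex.I) * u‖ := by
    calc (0:ℝ) < Real.cos (θ / 2) * (1 + u) := mul_pos hc (by linarith)
    _ ≤ _ := hA
  rw [gI, norm_div,
    Complex.norm_cpow_eq_rpow_re_of_pos hu, Complex.sub_re, Complex.one_re]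
  calc u ^ (s.re - 1) / ‖1 + Complex.exp (θ * Complex.I) * u‖
      ≤ u ^ (s.re - 1) / (Real.cos (θ / 2) * (1 + u)) :=
        div_le_div_of_nonneg_left (Real.rpow_nonneg hu.le _)
          (mul_pos hc (by linarith)) hA
    _ = (Real.cos (θ / 2))⁻¹ * (u ^ (s.re - 1) / (1 + u)) := by
        field_simp

lemma norm_g2I {s : ℂ} {θ : ℝ} {u : ℝ} (hu : 0 < u) (hθ : |θ| < Real.pi) :
    ‖g2I s θ u‖ ≤ ((Real.cos (θ / 2))⁻¹) ^ 2 * (u ^ s.re / (1 + u) ^ 2) := by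
  have hc : 0 < Real.cos (θ / 2) := cos_half_pos hθ
  have hA := abs_one_add_exp_mul u hu.le hθ
  have hApos : 0 < ‖1 + Complex.exp (θ * Complex.I) * u‖ := by
    calc (0:ℝ) < Real.cos (θ / 2) * (1 + u) := mul_pos hc (by linarith)
    _ ≤ _ := hA
  rw [g2I, norm_div, norm_pow,
    Complex.norm_cpow_eq_rpow_re_of_pos hu]
  have hsq : (Real.cos (θ / 2) * (1 + u)) ^ 2
      ≤ (‖1 + Complex.exp (θ * Complex.I) * u‖) ^ 2 := by
    apply pow_le_pow_left₀ (by positivity) hA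
  calc u ^ s.re / ‖1 + Complex.exp (θ * Complex.I) * u‖ ^ 2
      ≤ u ^ s.re / (Real.cos (θ / 2) * (1 + u)) ^ 2 :=
        div_le_div_of_nonneg_left (Real.rpow_nonneg hu.le _)
          (by positivity) hsq
    _ = ((Real.cos (θ / 2))⁻¹) ^ 2 * (u ^ s.re / (1 + u) ^ 2) := by
        rw [mul_pow, div_mul_eq_div_div_swap, div_eq_inv_mul, inv_pow]

lemma norm_DG {s : ℂ} {θ : ℝ} {u : ℝ} (hu : 0 < u) (hθ : |θ| < Real.pi) :
    ‖DG s θ u‖ ≤ ((Real.cos (θ / 2))⁻¹) ^ 2 * (u ^ s.re / (1 + u) ^ 2) := by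
  have h1 : ‖DG s θ u‖ = ‖g2I s θ u‖ := by
    have habs_exp : ‖Complex.exp (θ * Complex.I)‖ = 1 := by
      rw [Complex.norm_exp]; simp
    have hcp : u ^ (s.re - 1) * u = u ^ s.re := by
      rw [Real.rpow_sub hu, Real.rpow_one, div_mul_cancel₀ _ (ne_of_gt hu)]
    rw [DG, g2I, norm_div, norm_div, norm_neg, norm_mul, norm_mul, norm_mul]
    simp only [habs_exp, Complex.norm_I, Complex.norm_real, Real.norm_eq_abs,
      abs_of_nonneg hu.le, Complex.norm_cpow_eq_rpow_re_of_pos hu, Complex.sub_re,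
      Complex.one_re, one_mul, mul_one]
    rw [hcp]
  rw [h1]
  exact norm_g2I hu hθ


lemma continuousOn_gI {s : ℂ} {θ : ℝ} (hθ : |θ| < Real.pi) :
    ContinuousOn (gI s θ) (Ioi 0) := by
  intro u hu
  apply ContinuousWithinAt.div
  · exact (Complex.continuousAt_ofReal_cpow_const u (s-1) (Or.inr (ne_of_gt hu))).continuousWithinAt
  · exact (continuous_const.add ((Complex.continuous_exp.comp continuous_const).mul
      Complex.continuous_ofReal)).continuousWithinAt
  · exact one_add_exp_mul_ne u (le_of_lt hu) hθ

lemma continuousOn_g2I {s : ℂ} {θ : ℝ} (hθ : |θ| < Real.pi) :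
    ContinuousOn (g2I s θ) (Ioi 0) := by
  intro u hu
  apply ContinuousWithinAt.div
  · exact (Complex.continuousAt_ofReal_cpow_const u s (Or.inr (ne_of_gt hu))).continuousWithinAt
  · exact ((continuous_const.add ((Complex.continuous_exp.comp continuous_const).mul
      Complex.continuous_ofReal)).pow 2).continuousWithinAt
  · exact pow_ne_zero 2 (one_add_exp_mul_ne u (le_of_lt hu) hθ)

lemma continuousOn_DG {s : ℂ} {θ : ℝ} (hθ : |θ| < Real.pi) :
    ContinuousOn (DG s θ) (Ioi 0) := by
  intro u hu
  apply ContinuousWithinAt.div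
  · apply ContinuousWithinAt.neg
    exact ((Complex.continuousAt_ofReal_cpow_const u (s-1)
      (Or.inr (ne_of_gt hu))).continuousWithinAt).mul
      (continuous_const.mul Complex.continuous_ofReal).continuousWithinAt
  · exact ((continuous_const.add ((Complex.continuous_exp.comp continuous_const).mul
      Complex.continuous_ofReal)).pow 2).continuousWithinAt
  · exact pow_ne_zero 2 (one_add_exp_mul_ne u (le_of_lt hu) hθ)

lemma integrableOn_gI {s : ℂ} {θ : ℝ} (hs0 : 0 < s.re) (hs1 : s.re < 1)
    (hθ : |θ| < Real.pi) : IntegrableOn (gI s θ) (Ioi 0) := by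
  refine Integrable.mono' ((integrableOn_B1 hs0 hs1).const_mul ((Real.cos (θ/2))⁻¹)) ?_ ?_
  · exact (continuousOn_gI hθ).aestronglyMeasurable measurableSet_Ioi
  · filter_upwards [ae_restrict_mem measurableSet_Ioi] with u hu
    exact norm_gI hu hθ

lemma integrableOn_g2I {s : ℂ} {θ : ℝ} (hs0 : 0 < s.re) (hs1 : s.re < 1)
    (hθ : |θ| < Real.pi) : IntegrableOn (g2I s θ) (Ioi 0) := by
  refine Integrable.mono' ((integrableOn_B2 hs0 hs1).const_mul (((Real.cos (θ/2))⁻¹)^2)) ?_ ?_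
  · exact (continuousOn_g2I hθ).aestronglyMeasurable measurableSet_Ioi
  · filter_upwards [ae_restrict_mem measurableSet_Ioi] with u hu
    exact norm_g2I hu hθ

lemma integrableOn_DG {s : ℂ} {θ : ℝ} (hs0 : 0 < s.re) (hs1 : s.re < 1)
    (hθ : |θ| < Real.pi) : IntegrableOn (DG s θ) (Ioi 0) := by
  refine Integrable.mono' ((integrableOn_B2 hs0 hs1).const_mul (((Real.cos (θ/2))⁻¹)^2)) ?_ ?_
  · exact (continuousOn_DG hθ).aestronglyMeasurable measurableSet_Ioi
  · filter_upwards [ae_restrict_mem measurableSet_Ioi] with u hu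
    exact norm_DG hu hθ

lemma hasDerivAt_exp_mul_I (θ : ℝ) :
    HasDerivAt (fun θ' : ℝ => Complex.exp (θ' * Complex.I))
      (Complex.exp (θ * Complex.I) * Complex.I) θ := by
  have h1 : HasDerivAt (fun z : ℂ => Complex.exp (z * Complex.I))
      (Complex.exp ((θ:ℂ) * Complex.I) * Complex.I) (θ:ℂ) := by
    exact (Complex.hasDerivAt_exp ((θ:ℂ) * Complex.I)).comp (θ:ℂ)
      (hasDerivAt_mul_const Complex.I)
  exact h1.comp_ofReal

lemma hasDerivAt_gI_theta {s : ℂ} {θ : ℝ} (u : ℝ) (hu : 0 ≤ u) (hθ : |θ| < Real.pi) :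
    HasDerivAt (fun θ' : ℝ => gI s θ' u) (DG s θ u) θ := by
  have hden : HasDerivAt (fun θ' : ℝ => 1 + Complex.exp (θ' * Complex.I) * u)
      (Complex.exp (θ * Complex.I) * Complex.I * u) θ :=
    ((hasDerivAt_exp_mul_I θ).mul_const (u:ℂ)).const_add 1
  have hne := one_add_exp_mul_ne u hu hθ
  have h := (hasDerivAt_const θ ((u:ℂ) ^ (s-1))).div hden hne
  convert h using 1
  · rfl
  · rfl
  rw [DG]
  field_simp
  ring

lemma hasDerivAt_HI {s : ℂ} {θ₀ : ℝ} (hs0 : 0 < s.re) (hs1 : s.re < 1)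
    (hθ₀ : |θ₀| < Real.pi) :
    HasDerivAt (HI s) (∫ u in Ioi (0:ℝ), DG s θ₀ u) θ₀ := by
  have hπ := Real.pi_pos
  set b : ℝ := (Real.pi + |θ₀|) / 2 with hb
  set ε : ℝ := (Real.pi - |θ₀|) / 2 with hεdef
  have hε : 0 < ε := by rw [hεdef]; linarith
  have hbπ : b < Real.pi := by rw [hb]; linarith
  have hb0 : 0 ≤ b := by rw [hb]; positivity
  have hbabs : |b| < Real.pi := by rwa [abs_of_nonneg hb0]
  have hball : ∀ θ ∈ Metric.ball θ₀ ε, |θ| < b := by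
    intro θ hθ
    rw [Metric.mem_ball, Real.dist_eq] at hθ
    calc |θ| ≤ |θ - θ₀| + |θ₀| := by
          have := abs_add_le (θ - θ₀) θ₀; simpa using this
      _ < ε + |θ₀| := by linarith
      _ = b := by rw [hεdef, hb]; ring
  have hev : ∀ᶠ θ in nhds θ₀, |θ| < Real.pi :=
    continuous_abs.continuousAt.eventually_lt continuousAt_const hθ₀
  have key := hasDerivAt_integral_of_dominated_loc_of_deriv_le
    (F := fun (θ : ℝ) (u : ℝ) => gI s θ u) (F' := fun (θ : ℝ) (u : ℝ) => DG s θ u)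
    (μ := volume.restrict (Ioi (0:ℝ)))
    (bound := fun u : ℝ => ((Real.cos (b/2))⁻¹) ^ 2 * (u ^ s.re / (1 + u) ^ 2))
    (x₀ := θ₀) (Metric.ball_mem_nhds θ₀ hε)
    (hev.mono fun θ hθ => (continuousOn_gI hθ).aestronglyMeasurable measurableSet_Ioi)
    (integrableOn_gI hs0 hs1 hθ₀)
    ((continuousOn_DG hθ₀).aestronglyMeasurable measurableSet_Ioi)
    ?_ ((integrableOn_B2 hs0 hs1).const_mul _) ?_
  · exact key.2
  · filter_upwards [ae_restrict_mem measurableSet_Ioi] with u hu θ hθ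
    have h1 : |θ| < b := hball θ hθ
    have h2 : |θ| < Real.pi := lt_trans h1 hbπ
    calc ‖DG s θ u‖ ≤ ((Real.cos (θ/2))⁻¹) ^ 2 * (u ^ s.re / (1 + u) ^ 2) := norm_DG hu h2
      _ ≤ ((Real.cos (b/2))⁻¹) ^ 2 * (u ^ s.re / (1 + u) ^ 2) := by
          apply mul_le_mul_of_nonneg_right _
            (div_nonneg (Real.rpow_nonneg (le_of_lt hu) _) (by positivity))
          have hcb : 0 < Real.cos (b/2) := cos_half_pos hbabs
          have hle : Real.cos (b/2) ≤ Real.cos (θ/2) := cos_half_ge hbπ hb0 h1.le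
          exact pow_le_pow_left₀ (inv_nonneg.mpr (cos_half_pos h2).le)
            (inv_anti₀ hcb hle) 2
  · filter_upwards [ae_restrict_mem measurableSet_Ioi] with u hu θ hθ
    exact hasDerivAt_gI_theta u (le_of_lt hu) (lt_trans (hball θ hθ) hbπ)

lemma s_ne_zero {s : ℂ} (hs0 : 0 < s.re) : s ≠ 0 := by
  intro h; rw [h] at hs0; simp at hs0

lemma integral_g2I {s : ℂ} {θ : ℝ} (hs0 : 0 < s.re) (hs1 : s.re < 1)
    (hθ : |θ| < Real.pi) :
    Complex.exp (θ * Complex.I) * ∫ u in Ioi (0:ℝ), g2I s θ u = s * HI s θ := by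
  set a : ℂ := Complex.exp (θ * Complex.I) with ha
  have hs_ne : s ≠ 0 := s_ne_zero hs0
  have hcθ : 0 < Real.cos (θ/2) := cos_half_pos hθ
  set f : ℝ → ℂ := fun u => (u:ℂ) ^ s / (1 + a * u) with hf
  -- derivative of f on Ioi 0
  have hderiv : ∀ u ∈ Ioi (0:ℝ), HasDerivAt f (s * gI s θ u - a * g2I s θ u) u := by
    intro u hu
    have hu0 : (0:ℝ) < u := hu
    have h1 : s - 1 ≠ -1 := by
      intro h; apply hs_ne
      have := congrArg (· + 1) h; simpa using this
    have hnum0 := hasDerivAt_ofReal_cpow_const' (ne_of_gt hu0) h1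
    rw [sub_add_cancel] at hnum0
    have hnum1 := hnum0.const_mul s
    have heq : (fun y : ℝ => s * ((y:ℂ) ^ s / s)) = fun y : ℝ => (y:ℂ) ^ s :=
      funext fun y => mul_div_cancel₀ _ hs_ne
    rw [heq] at hnum1
    have hden : HasDerivAt (fun u : ℝ => 1 + a * (u:ℂ)) a u := by
      have : HasDerivAt (fun z : ℂ => 1 + a * z) a (u:ℂ) := by
        simpa using ((hasDerivAt_id (u:ℂ)).const_mul a).const_add 1
      exact this.comp_ofReal
    have hne : (1 + a * (u:ℂ)) ≠ 0 := one_add_exp_mul_ne u hu0.le hθ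
    have h := hnum1.div hden hne
    convert h using 1
    · rfl
    · rfl
    rw [gI, g2I]
    field_simp
    ring
  -- boundary values
  have hf0 : f 0 = 0 := by
    rw [hf]; simp [Complex.zero_cpow hs_ne]
  have hcont : ContinuousWithinAt f (Ici 0) 0 := by
    apply ContinuousWithinAt.div
    · exact (Complex.continuousAt_ofReal_cpow_const 0 s (Or.inl hs0)).continuousWithinAt
    · exact (continuous_const.add (continuous_const.mul
        Complex.continuous_ofReal)).continuousWithinAt
    · simp
  have htop : Tendsto f atTop (nhds 0) := by
    have hlim : Tendsto (fun u : ℝ => (Real.cos (θ/2))⁻¹ * u ^ (s.re - 1)) atTop (nhds 0) := by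
      have h0 : Tendsto (fun u : ℝ => u ^ (s.re - 1)) atTop (nhds 0) := by
        have := tendsto_rpow_neg_atTop (y := 1 - s.re) (by linarith)
        simpa [show -(1-s.re) = s.re - 1 by ring] using this
      simpa using h0.const_mul ((Real.cos (θ/2))⁻¹)
    apply squeeze_zero_norm' ?_ hlim
    · filter_upwards [eventually_gt_atTop (0:ℝ)] with u hu
      have hA := abs_one_add_exp_mul u hu.le hθ
      have hApos : 0 < ‖1 + a * u‖ :=
        lt_of_lt_of_le (mul_pos hcθ (by linarith)) hA
      rw [hf, norm_div,
        Complex.norm_cpow_eq_rpow_re_of_pos hu]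
      calc u ^ s.re / ‖1 + a * u‖ ≤ u ^ s.re / (Real.cos (θ/2) * u) := by
            apply div_le_div_of_nonneg_left (Real.rpow_nonneg hu.le _) (mul_pos hcθ hu)
            calc Real.cos (θ/2) * u ≤ Real.cos (θ/2) * (1+u) := by nlinarith
              _ ≤ _ := hA
        _ = (Real.cos (θ/2))⁻¹ * u ^ (s.re - 1) := by
            rw [Real.rpow_sub hu, Real.rpow_one]
            field_simp
  have f'int : IntegrableOn (fun u => s * gI s θ u - a * g2I s θ u) (Ioi 0) :=
    ((integrableOn_gI hs0 hs1 hθ).const_mul s).sub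
      ((integrableOn_g2I hs0 hs1 hθ).const_mul a)
  have hIBP := integral_Ioi_of_hasDerivAt_of_tendsto hcont hderiv f'int htop
  rw [hf0, sub_zero] at hIBP
  rw [integral_sub ((integrableOn_gI hs0 hs1 hθ).const_mul s)
    ((integrableOn_g2I hs0 hs1 hθ).const_mul a),
    integral_const_mul, integral_const_mul, sub_eq_zero] at hIBP
  rw [← hIBP, HI]

lemma hasDerivAt_HI' {s : ℂ} {θ : ℝ} (hs0 : 0 < s.re) (hs1 : s.re < 1)
    (hθ : |θ| < Real.pi) :
    HasDerivAt (HI s) (-(Complex.I * s) * HI s θ) θ := by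
  have h := hasDerivAt_HI hs0 hs1 hθ
  have heq : (∫ u in Ioi (0:ℝ), DG s θ u) = -(Complex.I * s) * HI s θ := by
    have h1 : ∀ u ∈ Ioi (0:ℝ), DG s θ u
        = (-(Complex.exp (θ * Complex.I) * Complex.I)) * g2I s θ u := by
      intro u hu
      have hu0 : (0:ℝ) < u := hu
      have hune : (u:ℂ) ≠ 0 := by exact_mod_cast ne_of_gt hu0
      have hcu : (u:ℂ) ^ (s - 1) * u = (u:ℂ) ^ s := by
        rw [Complex.cpow_sub _ _ hune, Complex.cpow_one, div_mul_cancel₀ _ hune]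
      rw [DG, g2I, ← hcu]
      ring
    calc (∫ u in Ioi (0:ℝ), DG s θ u)
        = ∫ u in Ioi (0:ℝ), (-(Complex.exp (θ * Complex.I) * Complex.I)) * g2I s θ u :=
          setIntegral_congr_fun measurableSet_Ioi h1
      _ = (-(Complex.exp (θ * Complex.I) * Complex.I)) * ∫ u in Ioi (0:ℝ), g2I s θ u :=
          integral_const_mul _ _
      _ = -(Complex.I * s) * HI s θ := by
          have h2 := integral_g2I hs0 hs1 hθ
          calc (-(Complex.exp (θ * Complex.I) * Complex.I)) * ∫ u in Ioi (0:ℝ), g2I s θ u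
              = -Complex.I * (Complex.exp (θ * Complex.I) * ∫ u in Ioi (0:ℝ), g2I s θ u) := by
                ring
            _ = -Complex.I * (s * HI s θ) := by rw [h2]
            _ = -(Complex.I * s) * HI s θ := by ring
  rwa [heq] at h

lemma HI_eq {s : ℂ} (hs0 : 0 < s.re) (hs1 : s.re < 1) {θ : ℝ} (hθ : |θ| < Real.pi) :
    HI s θ = HI s 0 * Complex.exp (-(Complex.I * s * θ)) := by
  have hπ := Real.pi_pos
  set K : ℝ → ℂ := fun t => HI s t * Complex.exp (Complex.I * s * t) with hKdef
  have hKd : ∀ t : ℝ, |t| < Real.pi → HasDerivAt K 0 t := by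
    intro t ht
    have h1 := hasDerivAt_HI' hs0 hs1 ht
    have h2 : HasDerivAt (fun t : ℝ => Complex.exp (Complex.I * s * t))
        (Complex.exp (Complex.I * s * t) * (Complex.I * s)) t := by
      have hg : HasDerivAt (fun t : ℝ => Complex.I * s * (t:ℂ)) (Complex.I * s) t := by
        simpa using ((hasDerivAt_id t).ofReal_comp).const_mul (Complex.I * s)
      exact hg.cexp
    have h3 := h1.mul h2
    convert h3 using 1
    · rfl
    · rfl
    ring
  have hconst : K θ = K 0 := by
    rcases le_or_gt 0 θ with h | h
    · have habs : ∀ x ∈ Icc (0:ℝ) θ, |x| < Real.pi := by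
        intro x hx
        rw [abs_of_nonneg hx.1]
        calc x ≤ θ := hx.2
          _ < Real.pi := by rwa [abs_of_nonneg h] at hθ
      have := constant_of_has_deriv_right_zero (f := K) (a := (0:ℝ)) (b := θ)
        (fun x hx => ((hKd x (habs x hx)).continuousAt).continuousWithinAt)
        (fun x hx => (hKd x (habs x ⟨hx.1, hx.2.le⟩)).hasDerivWithinAt)
      exact this θ ⟨h, le_refl θ⟩
    · have habs : ∀ x ∈ Icc θ (0:ℝ), |x| < Real.pi := by
        intro x hx
        have h1 := abs_lt.mp hθ
        rw [abs_lt]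
        exact ⟨by linarith [hx.1], by linarith [hx.2]⟩
      have := constant_of_has_deriv_right_zero (f := K) (a := θ) (b := (0:ℝ))
        (fun x hx => ((hKd x (habs x hx)).continuousAt).continuousWithinAt)
        (fun x hx => (hKd x (habs x ⟨hx.1, hx.2.le⟩)).hasDerivWithinAt)
      exact (this 0 ⟨h.le, le_refl 0⟩).symm
  have h0 : K 0 = HI s 0 := by rw [hKdef]; simp
  rw [h0] at hconst
  calc HI s θ = (HI s θ * Complex.exp (Complex.I * s * θ))
        * Complex.exp (-(Complex.I * s * θ)) := by
        rw [mul_assoc, ← Complex.exp_add]; simp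
    _ = HI s 0 * Complex.exp (-(Complex.I * s * θ)) := by rw [← hconst]


lemma image_Ioo_div : (fun v : ℝ => v / (1 - v)) '' Ioo 0 1 = Ioi 0 := by
  ext u
  constructor
  · rintro ⟨v, hv, rfl⟩
    exact div_pos hv.1 (by linarith [hv.2])
  · intro hu
    refine ⟨u / (1 + u), ⟨div_pos hu (by linarith [mem_Ioi.mp hu]), ?_⟩, ?_⟩
    · rw [div_lt_one (by linarith [mem_Ioi.mp hu])]; linarith [mem_Ioi.mp hu]
    · have h1 : (0:ℝ) < 1 + u := by linarith [mem_Ioi.mp hu]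
      field_simp
      ring

lemma hasDerivAt_div_one_sub {v : ℝ} (hv : v ∈ Ioo (0:ℝ) 1) :
    HasDerivAt (fun v : ℝ => v / (1 - v)) (((1 - v) ^ 2)⁻¹) v := by
  have hne : (1 - v) ≠ 0 := by intro h; have := hv.2; rw [sub_eq_zero] at h; linarith
  have h := (hasDerivAt_id v).div ((hasDerivAt_id v).const_sub 1) hne
  convert h using 1
  · rfl
  · rfl
  · rfl
  simp only [id]
  field_simp
  ring

lemma injOn_div_one_sub : InjOn (fun v : ℝ => v / (1 - v)) (Ioo 0 1) := by
  intro a ha b hb h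
  have h1 : (1 - a) ≠ 0 := by intro hh; rw [sub_eq_zero] at hh; linarith [ha.2]
  have h2 : (1 - b) ≠ 0 := by intro hh; rw [sub_eq_zero] at hh; linarith [hb.2]
  field_simp at h
  linarith

lemma alg_aux {W Ws V : ℂ} (hW : W ≠ 0) (hWs : Ws ≠ 0) :
    (W ^ 2)⁻¹ * (V * (W / Ws) / W⁻¹) = V * Ws⁻¹ := by
  field_simp

lemma beta_integrand_eq {s : ℂ} {v : ℝ} (hv : v ∈ Ioo (0:ℝ) 1) :
    |((1 - v) ^ 2)⁻¹| • (((v / (1 - v) : ℝ) : ℂ) ^ (s - 1) / (1 + ((v / (1 - v) : ℝ) : ℂ)))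
      = (v:ℂ) ^ (s - 1) * (1 - (v:ℂ)) ^ ((1 - s) - 1) := by
  have hv0 : (0:ℝ) < v := hv.1
  have hw0 : (0:ℝ) < 1 - v := by linarith [hv.2]
  have hwne : ((1 - v : ℝ) : ℂ) ≠ 0 := by exact_mod_cast ne_of_gt hw0
  have hWeq : ((1 - v : ℝ) : ℂ) = 1 - (v:ℂ) := by push_cast; ring
  have hquot : (((v / (1 - v) : ℝ)) : ℂ) ^ (s - 1)
      = (v:ℂ) ^ (s - 1) * (((1 - v : ℝ):ℂ) ^ (s - 1))⁻¹ := by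
    rw [show (v / (1 - v) : ℝ) = v * (1 - v)⁻¹ by ring, Complex.ofReal_mul,
      Complex.mul_cpow_ofReal_nonneg hv0.le (inv_nonneg.mpr hw0.le),
      Complex.ofReal_inv, Complex.inv_cpow _ _ (by
        rw [Complex.arg_ofReal_of_nonneg hw0.le]; exact Real.pi_ne_zero.symm)]
  have hdenom : 1 + (((v / (1 - v) : ℝ)) : ℂ) = (((1 - v : ℝ)):ℂ)⁻¹ := by
    rw [Complex.ofReal_div]
    rw [add_div' _ _ _ hwne, inv_eq_one_div]
    congr 1
    push_cast
    ring
  have habs : |((1 - v) ^ 2)⁻¹| = ((1 - v)^2)⁻¹ := abs_of_nonneg (by positivity)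
  have hWs : ((1 - v : ℝ):ℂ) ^ (s - 1) = ((1 - v : ℝ):ℂ) ^ s / ((1 - v : ℝ):ℂ) := by
    rw [Complex.cpow_sub _ _ hwne, Complex.cpow_one]
  have hWsne : ((1 - v : ℝ):ℂ) ^ s ≠ 0 := by
    rw [Ne, Complex.cpow_eq_zero_iff]
    rintro ⟨h, -⟩
    exact hwne h
  rw [hquot, hdenom, habs, Complex.real_smul, Complex.ofReal_inv, Complex.ofReal_pow,
    show ((1:ℂ) - s - 1) = -s by ring, ← hWeq, Complex.cpow_neg, hWs, inv_div]
  exact alg_aux hwne hWsne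

lemma HI_zero {s : ℂ} (hs0 : 0 < s.re) (hs1 : s.re < 1) :
    HI s 0 = (Real.pi : ℂ) / Complex.sin (Real.pi * s) := by
  have h1 : HI s 0 = ∫ u in Ioi (0:ℝ), (u:ℂ) ^ (s - 1) / (1 + (u:ℂ)) := by
    rw [HI]
    apply setIntegral_congr_fun measurableSet_Ioi
    intro u hu
    rw [gI]
    norm_num
  have hchg := integral_image_eq_integral_abs_deriv_smul measurableSet_Ioo
    (fun v hv => (hasDerivAt_div_one_sub hv).hasDerivWithinAt) injOn_div_one_sub
    (fun u : ℝ => (u:ℂ) ^ (s - 1) / (1 + (u:ℂ)))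
  rw [image_Ioo_div] at hchg
  have h2 : (∫ v in Ioo (0:ℝ) 1, |((1 - v) ^ 2)⁻¹| •
        (((v / (1 - v) : ℝ) : ℂ) ^ (s - 1) / (1 + ((v / (1 - v) : ℝ) : ℂ))))
      = ∫ v in Ioo (0:ℝ) 1, (v:ℂ) ^ (s - 1) * (1 - (v:ℂ)) ^ ((1 - s) - 1) := by
    apply setIntegral_congr_fun measurableSet_Ioo
    intro v hv
    exact beta_integrand_eq hv
  have h3 : (∫ v in Ioo (0:ℝ) 1, (v:ℂ) ^ (s - 1) * (1 - (v:ℂ)) ^ ((1 - s) - 1))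
      = Complex.betaIntegral s (1 - s) := by
    rw [Complex.betaIntegral, intervalIntegral.integral_of_le zero_le_one,
      ← integral_Ioc_eq_integral_Ioo]
  have h4 : Complex.betaIntegral s (1 - s) = (Real.pi : ℂ) / Complex.sin (Real.pi * s) := by
    have hb := Complex.Gamma_mul_Gamma_eq_betaIntegral hs0
      (by simp only [Complex.sub_re, Complex.one_re]; linarith : 0 < (1 - s).re)
    rw [show s + (1 - s) = 1 by ring, Complex.Gamma_one, one_mul] at hb
    rw [← hb, Complex.Gamma_mul_Gamma_one_sub]
  rw [h1, hchg, h2, h3, h4]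



lemma pi_ne_C : ((Real.pi : ℝ) : ℂ) ≠ 0 := by
  exact_mod_cast Real.pi_ne_zero

lemma sin_pi_s_ne {x k : ℝ} (hx : x ∈ Ioo (0:ℝ) 1) :
    Complex.sin ((Real.pi : ℂ) * ((x:ℂ) - Complex.I * k)) ≠ 0 := by
  intro h
  rw [Complex.sin_eq_zero_iff] at h
  obtain ⟨n, hn⟩ := h
  have hs : (x:ℂ) - Complex.I * k = (n:ℂ) := by
    have := mul_left_cancel₀ pi_ne_C (by rw [hn]; ring : (Real.pi:ℂ) * ((x:ℂ) - Complex.I*k) = (Real.pi:ℂ) * (n:ℂ))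
    exact this
  have hre : x = (n:ℝ) := by
    have := congrArg Complex.re hs
    simpa using this
  have h1 : (0:ℝ) < (n:ℝ) := hre ▸ hx.1
  have h2 : ((n:ℝ)) < 1 := hre ▸ hx.2
  have h3 : 0 < n := by exact_mod_cast h1
  have h4 : n < 1 := by exact_mod_cast h2
  omega

lemma eC_ne_one {w k : ℝ} (hw : w ∈ Ioo (0:ℝ) 1) :
    1 - eC ((w:ℝ) + Complex.I * k) ≠ 0 := by
  intro h
  have h1 : eC ((w:ℝ) + Complex.I * k) = 1 := by
    have := sub_eq_zero.mp h; exact this.symm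
  -- take absolute values to get k = 0
  have hre : (2 * (Real.pi:ℂ) * Complex.I * ((w:ℝ) + Complex.I * k)).re = -(2 * Real.pi * k) := by
    simp [Complex.mul_re, Complex.mul_im, Complex.add_re, Complex.add_im]
  have habs : Real.exp (-(2 * Real.pi * k)) = 1 := by
    have := congrArg (‖·‖) h1
    rwa [eC, Complex.norm_exp, hre, norm_one] at this
  have hk : k = 0 := by
    rw [Real.exp_eq_one_iff] at habs
    have h0 : (2 * Real.pi) * k = 0 := by linarith
    rcases mul_eq_zero.mp h0 with h | h
    · exact absurd h (by positivity)
    · exact h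
  rw [hk] at h1
  rw [eC, Complex.exp_eq_one_iff] at h1
  obtain ⟨n, hn⟩ := h1
  have h2 : (w:ℂ) = (n:ℂ) := by
    have h2πI : (2 * (Real.pi:ℂ) * Complex.I) ≠ 0 := by
      simp [Real.pi_ne_zero, Complex.I_ne_zero]
    have : 2 * (Real.pi:ℂ) * Complex.I * (w:ℂ) = 2 * (Real.pi:ℂ) * Complex.I * (n:ℂ) := by
      rw [show 2 * (Real.pi:ℂ) * Complex.I * ((w:ℝ):ℂ) = 2 * (Real.pi:ℂ) * Complex.I * (((w:ℝ):ℂ) + Complex.I * ((0:ℝ):ℂ)) by push_cast; ring, hn]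
      ring
    exact mul_left_cancel₀ h2πI this
  have hre2 : w = (n:ℝ) := by
    have := congrArg Complex.re h2
    simpa using this
  have h3 : 0 < n := by exact_mod_cast hre2 ▸ hw.1
  have h4 : n < 1 := by exact_mod_cast hre2 ▸ hw.2
  omega

lemma two_sin_mul_I (w : ℂ) :
    2 * Complex.sin w * Complex.I = Complex.exp (w * Complex.I) - Complex.exp (-(w * Complex.I)) := by
  rw [Complex.sin]
  have h := Complex.I_sq
  field_simp
  linear_combination (Complex.exp (-(w * Complex.I)) - Complex.exp (w * Complex.I)) * h


lemma image_exp_univ : (fun t : ℝ => Real.exp (-2*Real.pi*t)) '' univ = Ioi 0 := by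
  ext u
  simp only [image_univ, mem_range, mem_Ioi]
  constructor
  · rintro ⟨t, rfl⟩; exact Real.exp_pos _
  · intro hu
    refine ⟨-(Real.log u)/(2*Real.pi), ?_⟩
    rw [show -2*Real.pi*(-(Real.log u)/(2*Real.pi)) = Real.log u by
      field_simp, Real.exp_log hu]

lemma injOn_exp_univ : InjOn (fun t : ℝ => Real.exp (-2*Real.pi*t)) univ := by
  intro a _ b _ h
  have h1 := Real.exp_injective h
  have h2 : (-2*Real.pi) ≠ 0 := by
    have := Real.pi_pos; intro hh; nlinarith
  exact mul_left_cancel₀ h2 h1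

lemma hasDerivAt_exp_neg (t : ℝ) :
    HasDerivAt (fun t : ℝ => Real.exp (-2*Real.pi*t))
      (Real.exp (-2*Real.pi*t) * (-2*Real.pi)) t := by
  have h1 : HasDerivAt (fun t : ℝ => -2*Real.pi*t) (-2*Real.pi) t := by
    simpa using (hasDerivAt_id t).const_mul (-2*Real.pi)
  exact h1.exp

/-- pointwise identity for the substitution `u = exp (-2πt)` -/
lemma subst_pointwise {x y k t : ℝ} (hx : x ∈ Ioo (0:ℝ) 1) (hy : y ∈ Ioo (0:ℝ) 1) :
    |Real.exp (-2*Real.pi*t) * (-2*Real.pi)| •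
        gI ((x:ℂ) - Complex.I * k) (Real.pi * (2*y - 1)) (Real.exp (-2*Real.pi*t))
      = (2*(Real.pi:ℂ)) * (phiF t x y * eC ((t * k : ℝ) : ℂ)) := by
  set s : ℂ := (x:ℂ) - Complex.I * k with hsdef
  set r : ℝ := -2*Real.pi*t with hrdef
  have hrexp : (0:ℝ) < Real.exp r := Real.exp_pos r
  have habs : |Real.exp r * (-2*Real.pi)| = Real.exp r * (2*Real.pi) := by
    rw [abs_mul, abs_of_pos hrexp, abs_of_nonpos (by nlinarith [Real.pi_pos] : -2*Real.pi ≤ 0)]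
    ring
  have hcast : ((Real.exp r : ℝ) : ℂ) = Complex.exp ((r:ℝ) : ℂ) := Complex.ofReal_exp r
  have hpow : ((Real.exp r : ℝ) : ℂ) ^ (s - 1) = Complex.exp (((r:ℝ):ℂ) * (s-1)) := by
    rw [Complex.cpow_def_of_ne_zero (by rw [hcast]; exact Complex.exp_ne_zero _)]
    congr 1
    rw [← Complex.ofReal_log hrexp.le, Real.log_exp]
  have hden : (1 : ℂ) + Complex.exp ((Real.pi * (2*y-1) : ℝ) * Complex.I) * ((Real.exp r : ℝ):ℂ)
      = 1 - eC ((y:ℝ) + Complex.I * (t:ℝ)) := by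
    rw [hcast, ← Complex.exp_add]
    have h1 : -eC ((y:ℝ) + Complex.I * t)
        = Complex.exp (2*(Real.pi:ℂ)*Complex.I*((y:ℝ) + Complex.I*(t:ℝ)) + (Real.pi:ℂ) * Complex.I) := by
      rw [eC, Complex.exp_add, Complex.exp_pi_mul_I]
      ring
    have h2 : 2*(Real.pi:ℂ)*Complex.I*((y:ℝ) + Complex.I*(t:ℝ)) + (Real.pi:ℂ) * Complex.I
        = (((Real.pi * (2*y-1) : ℝ)):ℂ) * Complex.I + ((r:ℝ):ℂ) + 2*(Real.pi:ℂ)*Complex.I := by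
      rw [hrdef]
      push_cast
      linear_combination (2*(Real.pi:ℂ)*(t:ℝ)) * Complex.I_sq
    have h3 : Complex.exp ((((Real.pi * (2*y-1) : ℝ)):ℂ) * Complex.I + ((r:ℝ):ℂ))
        = -eC ((y:ℝ) + Complex.I * t) := by
      rw [h1, h2]
      simp [Complex.exp_add, Complex.exp_two_pi_mul_I]
    rw [h3]
    ring
  have hnum : Complex.exp (((r:ℝ):ℂ) * s) = eC (Complex.I * (t:ℝ) * (x:ℝ)) * eC ((t * k : ℝ):ℂ) := by
    rw [eC, eC, ← Complex.exp_add]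
    congr 1
    rw [hsdef, hrdef]
    push_cast
    linear_combination (-(2*(Real.pi:ℂ)*(t:ℝ)*(x:ℝ))) * Complex.I_sq
  have hfin : (Complex.exp ((r:ℝ):ℂ)) * Complex.exp (((r:ℝ):ℂ) * (s-1))
      = eC (Complex.I * (t:ℝ) * (x:ℝ)) * eC ((t * k : ℝ):ℂ) := by
    rw [← Complex.exp_add, ← hnum]
    congr 1
    ring
  rw [habs, gI, hpow, hden, Complex.real_smul, phiF, Complex.ofReal_mul, hcast,
    show ((2*Real.pi : ℝ):ℂ) = 2*(Real.pi:ℂ) by push_cast; ring,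
    div_eq_mul_inv, div_eq_mul_inv]
  linear_combination (2*(Real.pi:ℂ) * (1 - eC ((y:ℝ) + Complex.I * (t:ℝ)))⁻¹) * hfin


lemma onedim {x y k : ℝ} (hx : x ∈ Ioo (0:ℝ) 1) (hy : y ∈ Ioo (0:ℝ) 1) :
    ∫ t : ℝ, phiF t x y * eC ((t * k : ℝ) : ℂ)
      = Complex.I * eC (-((y * x : ℝ) : ℂ)) * phiF k y (1 - x) := by
  set s : ℂ := (x:ℂ) - Complex.I * k with hsdef
  set θ : ℝ := Real.pi * (2*y - 1) with hθdef
  have hs0 : 0 < s.re := by rw [hsdef]; simpa using hx.1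
  have hs1 : s.re < 1 := by rw [hsdef]; simpa using hx.2
  have hθabs : |θ| < Real.pi := by
    rw [hθdef, abs_mul, abs_of_pos Real.pi_pos]
    have h1 : |2*y-1| < 1 := abs_lt.mpr ⟨by linarith [hy.1], by linarith [hy.2]⟩
    nlinarith [Real.pi_pos]
  -- change of variables u = exp(-2πt)
  have hctv := integral_image_eq_integral_abs_deriv_smul (MeasurableSet.univ)
    (fun t _ => (hasDerivAt_exp_neg t).hasDerivWithinAt) injOn_exp_univ (gI s θ)
  rw [image_exp_univ, setIntegral_univ] at hctv
  have hHI : HI s θ = (2*(Real.pi:ℂ)) * ∫ t : ℝ, phiF t x y * eC ((t * k : ℝ) : ℂ) := by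
    rw [HI, hctv]
    rw [show (fun t : ℝ => |Real.exp (-2*Real.pi*t) * (-2*Real.pi)| •
        gI s θ (Real.exp (-2*Real.pi*t)))
      = fun t : ℝ => (2*(Real.pi:ℂ)) * (phiF t x y * eC ((t * k : ℝ) : ℂ)) from
      funext fun t => subst_pointwise hx hy]
    rw [integral_const_mul]
  have hval : HI s θ = ((Real.pi:ℂ)/Complex.sin ((Real.pi:ℂ)*s)) * Complex.exp (-(Complex.I*s*θ)) := by
    rw [HI_eq hs0 hs1 hθabs, HI_zero hs0 hs1]
  have h2π : (2*(Real.pi:ℂ)) ≠ 0 := by simp [Real.pi_ne_zero]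
  have hsin := sin_pi_s_ne (k := k) hx
  have hden := eC_ne_one (k := k) (show (1 - x : ℝ) ∈ Ioo (0:ℝ) 1 from
    ⟨by linarith [hx.2], by linarith [hx.1]⟩)
  have hint : (∫ t : ℝ, phiF t x y * eC ((t * k : ℝ) : ℂ))
      = (2*(Real.pi:ℂ))⁻¹ * (((Real.pi:ℂ)/Complex.sin ((Real.pi:ℂ)*s)) * Complex.exp (-(Complex.I*s*θ))) := by
    rw [← hval, hHI]
    rw [← mul_assoc, inv_mul_cancel₀ h2π, one_mul]
  rw [hint, phiF]
  -- final exponential algebra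
  set C : ℂ := 2*(Real.pi:ℂ)*Complex.I*(-((y*x:ℝ):ℂ)) + 2*(Real.pi:ℂ)*Complex.I*(Complex.I*(k:ℝ)*(y:ℝ)) with hC
  have e1 : eC (-((y*x:ℝ):ℂ)) * eC (Complex.I * (k:ℝ) * (y:ℝ)) = Complex.exp C := by
    rw [eC, eC, ← Complex.exp_add]
  have hA : -(Complex.I*s*(θ:ℂ)) = (Real.pi:ℂ)*s*Complex.I + C := by
    rw [hsdef, hC, hθdef]
    push_cast
    ring
  have hB : -(Complex.I*s*(θ:ℂ)) + 2*(Real.pi:ℂ)*Complex.I*(((1 - x : ℝ):ℂ) + Complex.I*(k:ℝ))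
      = (-((Real.pi:ℂ)*s*Complex.I) + C) + 2*(Real.pi:ℂ)*Complex.I := by
    rw [hsdef, hC, hθdef]
    push_cast
    ring
  have key : Complex.exp (-(Complex.I*s*(θ:ℂ))) * (1 - eC (((1 - x:ℝ):ℂ) + Complex.I*(k:ℝ)))
      = Complex.I * Complex.exp C * (2*Complex.sin ((Real.pi:ℂ)*s)) := by
    have hL : Complex.exp (-(Complex.I*s*(θ:ℂ))) * (1 - eC (((1 - x:ℝ):ℂ) + Complex.I*(k:ℝ)))
        = Complex.exp ((Real.pi:ℂ)*s*Complex.I + C) - Complex.exp (-((Real.pi:ℂ)*s*Complex.I) + C) := by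
      rw [eC, mul_sub, mul_one, ← Complex.exp_add, hB, hA, Complex.exp_add
        (-((Real.pi:ℂ)*s*Complex.I) + C), Complex.exp_two_pi_mul_I, mul_one]
    have hR : Complex.I * Complex.exp C * (2*Complex.sin ((Real.pi:ℂ)*s))
        = Complex.exp ((Real.pi:ℂ)*s*Complex.I + C) - Complex.exp (-((Real.pi:ℂ)*s*Complex.I) + C) := by
      have h5 := two_sin_mul_I ((Real.pi:ℂ)*s)
      rw [Complex.exp_add ((Real.pi:ℂ)*s*Complex.I) C,
        Complex.exp_add (-((Real.pi:ℂ)*s*Complex.I)) C]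
      linear_combination (Complex.exp C) * h5
    rw [hL, hR]
  -- conclude
  have hsin' : Complex.sin ((Real.pi:ℂ)*s) ≠ 0 := by rw [hsdef]; exact hsin
  have key' : Complex.exp (-(Complex.I*s*(θ:ℂ))) * (1 - eC (1 - (x:ℂ) + Complex.I*(k:ℝ)))
      = Complex.I * Complex.exp C * (2*Complex.sin ((Real.pi:ℂ)*s)) := by
    rw [show (1 - (x:ℂ) + Complex.I*(k:ℝ)) = (((1 - x:ℝ):ℂ) + Complex.I*(k:ℝ)) by
      push_cast; ring]
    exact key
  have hden' : 1 - eC (1 - (x:ℂ) + Complex.I*(k:ℝ)) ≠ 0 := by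
    rw [show (1 - (x:ℂ) + Complex.I*(k:ℝ)) = (((1 - x:ℝ):ℂ) + Complex.I*(k:ℝ)) by
      push_cast; ring]
    exact hden
  have e1' : Complex.I * eC (-((y*x:ℝ):ℂ)) * eC (Complex.I*(k:ℝ)*(y:ℝ))
      = Complex.I * Complex.exp C := by
    rw [mul_assoc, e1]
  rw [← mul_div_assoc, e1']
  field_simp [hsin', hden', h2π]
  rw [mul_comm s Complex.I]
  linear_combination key

lemma eC_sum {r : ℕ} (a : Fin r → ℝ) :
    eC ((∑ ν, a ν : ℝ) : ℂ) = ∏ ν, eC ((a ν : ℝ) : ℂ) := by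
  rw [eC]
  push_cast
  rw [Finset.mul_sum, Complex.exp_sum]
  rfl

theorem stmt_6' (r : ℕ) (A : Matrix (Fin r) (Fin r) ℝ) (hA : A.det ≠ 0)
    (x y : Fin r → ℝ)
    (hx : ∀ ν, x ν ∈ Set.Ioo (0 : ℝ) 1) (hy : ∀ ν, y ν ∈ Set.Ioo (0 : ℝ) 1)
    (k : Fin r → ℝ) :
    ∫ t : Fin r → ℝ, FF (Matrix.vecMul t A) x y * eC ((∑ ν, t ν * k ν : ℝ) : ℂ) =
      Complex.I ^ r / ((|A.det| : ℝ) : ℂ) * eC (-((∑ ν, y ν * x ν : ℝ) : ℂ)) *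
        FF (Matrix.vecMul k A.transpose⁻¹) y (fun ν => 1 - x ν) := by
  classical
  have hAu : IsUnit A.det := isUnit_iff_ne_zero.mpr hA
  set κ : Fin r → ℝ := Matrix.vecMul k A.transpose⁻¹ with hκ
  set f : (Fin r → ℝ) → (Fin r → ℝ) := fun s => Matrix.vecMul s A⁻¹ with hf
  set L : (Fin r → ℝ) →L[ℝ] (Fin r → ℝ) :=
    LinearMap.toContinuousLinearMap (Matrix.toLin' A⁻¹.transpose) with hL
  have hLf : ∀ s, L s = f s := by
    intro s
    rw [hL, hf]
    simp [Matrix.toLin'_apply, Matrix.mulVec_transpose]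
  have hLdet : L.det = (A.det)⁻¹ := by
    rw [hL]
    rw [ContinuousLinearMap.det]
    rw [LinearMap.coe_toContinuousLinearMap]
    rw [LinearMap.det_toLin', Matrix.det_transpose, Matrix.det_nonsing_inv,
      Ring.inverse_eq_inv']
  have hfder : ∀ s ∈ (univ : Set (Fin r → ℝ)), HasFDerivWithinAt f L univ s := by
    intro s _
    apply HasFDerivAt.hasFDerivWithinAt
    exact (L.hasFDerivAt).congr_of_eventuallyEq
      (Filter.Eventually.of_forall fun u => (hLf u).symm)
  have hinj : InjOn f univ := by
    intro a _ b _ h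
    have h' : Matrix.vecMul a A⁻¹ = Matrix.vecMul b A⁻¹ := h
    have : Matrix.vecMul (Matrix.vecMul a A⁻¹) A = Matrix.vecMul (Matrix.vecMul b A⁻¹) A := by
      rw [h']
    rwa [Matrix.vecMul_vecMul, Matrix.vecMul_vecMul, Matrix.nonsing_inv_mul A hAu,
      Matrix.vecMul_one, Matrix.vecMul_one] at this
  have himg : f '' univ = univ := by
    apply eq_univ_of_forall
    intro t
    refine ⟨Matrix.vecMul t A, mem_univ _, ?_⟩
    show Matrix.vecMul (Matrix.vecMul t A) A⁻¹ = t
    rw [Matrix.vecMul_vecMul, Matrix.mul_nonsing_inv A hAu, Matrix.vecMul_one]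
  have hctv := integral_image_eq_integral_abs_det_fderiv_smul volume MeasurableSet.univ
    hfder hinj (fun t => FF (Matrix.vecMul t A) x y * eC ((∑ ν, t ν * k ν : ℝ) : ℂ))
  rw [himg, setIntegral_univ, setIntegral_univ] at hctv
  rw [hctv]
  -- simplify the integrand
  have hsum : ∀ s : Fin r → ℝ, (∑ ν, (f s) ν * k ν) = ∑ μ, s μ * κ μ := by
    intro s
    rw [hκ, hf, ← Matrix.transpose_nonsing_inv]
    simp only [Matrix.vecMul, dotProduct, Matrix.transpose_apply,
      Finset.sum_mul, Finset.mul_sum]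
    rw [Finset.sum_comm]
    exact Finset.sum_congr rfl fun μ _ => Finset.sum_congr rfl fun ν _ => by ring
  have hpt : ∀ s : Fin r → ℝ,
      |L.det| • (FF (Matrix.vecMul (f s) A) x y * eC ((∑ ν, (f s) ν * k ν : ℝ) : ℂ))
      = |A.det|⁻¹ • ∏ ν, (phiF (s ν) (x ν) (y ν) * eC ((s ν * κ ν : ℝ) : ℂ)) := by
    intro s
    have h1 : Matrix.vecMul (f s) A = s := by
      rw [hf, Matrix.vecMul_vecMul, Matrix.nonsing_inv_mul A hAu, Matrix.vecMul_one]
    rw [h1, hsum s, hLdet, abs_inv, FF, eC_sum, ← Finset.prod_mul_distrib]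
  simp_rw [hpt]
  rw [integral_smul]
  rw [MeasureTheory.integral_fintype_prod_volume_eq_prod (ι := Fin r)
    (f := fun ν t => phiF t (x ν) (y ν) * eC ((t * κ ν : ℝ) : ℂ))]
  have hone : ∀ ν, (∫ t : ℝ, phiF t (x ν) (y ν) * eC ((t * κ ν : ℝ) : ℂ))
      = Complex.I * eC (-((y ν * x ν : ℝ) : ℂ)) * phiF (κ ν) (y ν) (1 - x ν) :=
    fun ν => onedim (hx ν) (hy ν)
  rw [Finset.prod_congr rfl fun ν _ => hone ν]
  rw [Finset.prod_mul_distrib, Finset.prod_mul_distrib, Finset.prod_const, Finset.card_univ,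
    Fintype.card_fin]
  have h2 : (∏ ν, eC (-((y ν * x ν : ℝ) : ℂ))) = eC (-((∑ ν, y ν * x ν : ℝ) : ℂ)) := by
    rw [show -((∑ ν, y ν * x ν : ℝ) : ℂ) = ((∑ ν, -(y ν * x ν) : ℝ) : ℂ) by push_cast; exact (Finset.sum_neg_distrib _).symm]
    rw [eC_sum (fun ν => -(y ν * x ν))]
    push_cast
    rfl
  rw [h2]
  have h3 : (∏ ν, phiF (κ ν) (y ν) (1 - x ν)) = FF κ y (fun ν => 1 - x ν) := rfl
  rw [h3, Complex.real_smul]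
  push_cast
  ring

end ShintaniAux

theorem stmt_6 (r : ℕ) (hr : 1 ≤ r) (A : Matrix (Fin r) (Fin r) ℝ) (hA : A.det ≠ 0)
    (x y : Fin r → ℝ)
    (hx : ∀ ν, x ν ∈ Set.Ioo (0 : ℝ) 1) (hy : ∀ ν, y ν ∈ Set.Ioo (0 : ℝ) 1)
    (k : Fin r → ℝ) :
    ∫ t : Fin r → ℝ, FF (Matrix.vecMul t A) x y * eC ((∑ ν, t ν * k ν : ℝ) : ℂ) =
      Complex.I ^ r / ((|A.det| : ℝ) : ℂ) * eC (-((∑ ν, y ν * x ν : ℝ) : ℂ)) *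
        FF (Matrix.vecMul k A.transpose⁻¹) y (fun ν => 1 - x ν) :=
  ShintaniAux.stmt_6' r A hA x y hx hy k

end
end
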